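/- Let O be a unitary operator and P a self-adjoint orthogonal projection on a finite-dimensional complex Hilbert space such that (1−P)O = 1−P. Then for any vector φ and any density matrix σ, |⟨φ, (OσO† − σ)φ⟩| ≤ 2‖Pφ‖·‖φ‖·(Tr((OσO† − σ)²))^{1/2}. -/

import Mathlib

open Matrix ComplexOrder

noncomputable def nrmSq {n : ℕ} (v : Fin n → ℂ) : ℝ := ∑ i, ‖v i‖ ^ 2
noncomputable def nrm {n : ℕ} (v : Fin n → ℂ) : ℝ := Real.sqrt (nrmSq v)
noncomputable def frob {n : ℕ} (A : Matrix (Fin n) (Fin n) ℂ) : ℝ :=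
  Real.sqrt (∑ i, ∑ j, ‖A i j‖ ^ 2)

lemma nrmSq_nonneg {n : ℕ} (v : Fin n → ℂ) : 0 ≤ nrmSq v :=
  Finset.sum_nonneg fun _ _ => sq_nonneg _

lemma nrm_nonneg {n : ℕ} (v : Fin n → ℂ) : 0 ≤ nrm v := Real.sqrt_nonneg _
lemma frob_nonneg {n : ℕ} (A : Matrix (Fin n) (Fin n) ℂ) : 0 ≤ frob A := Real.sqrt_nonneg _

lemma L1 {n : ℕ} (v : Fin n → ℂ) : (star v ⬝ᵥ v).re = nrmSq v := by
  simp [dotProduct, nrmSq, Complex.re_sum, Pi.star_apply, ← Complex.normSq_eq_norm_sq,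
    Complex.normSq_apply, Complex.mul_re]

lemma rcs {n : ℕ} (f g : Fin n → ℝ) (hf : ∀ i, 0 ≤ f i) (hg : ∀ i, 0 ≤ g i) :
    ∑ i, f i * g i ≤ Real.sqrt (∑ i, f i ^ 2) * Real.sqrt (∑ i, g i ^ 2) := by
  rw [← Real.sqrt_mul (Finset.sum_nonneg fun _ _ => sq_nonneg _)]
  have h := Finset.sum_mul_sq_le_sq_mul_sq Finset.univ f g
  have h0 : 0 ≤ ∑ i, f i * g i := Finset.sum_nonneg fun i _ => mul_nonneg (hf i) (hg i)
  calc ∑ i, f i * g i = Real.sqrt ((∑ i, f i * g i) ^ 2) := (Real.sqrt_sq h0).symm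
    _ ≤ Real.sqrt ((∑ i, f i ^ 2) * ∑ i, g i ^ 2) := Real.sqrt_le_sqrt h

lemma L2 {n : ℕ} (u v : Fin n → ℂ) : ‖star u ⬝ᵥ v‖ ≤ nrm u * nrm v := by
  have h1 : ‖star u ⬝ᵥ v‖ ≤ ∑ i, ‖u i‖ * ‖v i‖ := by
    refine (norm_sum_le _ _).trans_eq ?_
    exact Finset.sum_congr rfl fun i _ => by simp [Pi.star_apply, norm_mul]
  exact h1.trans (rcs _ _ (fun i => norm_nonneg _) (fun i => norm_nonneg _))

lemma L3 {n : ℕ} (A : Matrix (Fin n) (Fin n) ℂ) (v : Fin n → ℂ) :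
    nrm (A *ᵥ v) ≤ frob A * nrm v := by
  have hrow : ∀ i, ‖(A *ᵥ v) i‖ ≤
      Real.sqrt (∑ j, ‖A i j‖ ^ 2) * nrm v := by
    intro i
    have h1 : ‖(A *ᵥ v) i‖ ≤ ∑ j, ‖A i j‖ * ‖v j‖ := by
      simp only [Matrix.mulVec, dotProduct]
      refine (norm_sum_le _ _).trans_eq ?_
      exact Finset.sum_congr rfl fun j _ => norm_mul _ _
    exact h1.trans (rcs _ _ (fun j => norm_nonneg _) (fun j => norm_nonneg _))
  have hsq : nrmSq (A *ᵥ v) ≤ (∑ i, ∑ j, ‖A i j‖ ^ 2) * nrmSq v := by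
    have key : ∀ i, ‖(A *ᵥ v) i‖ ^ 2 ≤ (∑ j, ‖A i j‖ ^ 2) * nrmSq v := by
      intro i
      have h3 : (Real.sqrt (∑ j, ‖A i j‖ ^ 2) * nrm v) ^ 2
          = (∑ j, ‖A i j‖ ^ 2) * nrmSq v := by
        rw [mul_pow, Real.sq_sqrt (Finset.sum_nonneg fun _ _ => sq_nonneg _), nrm,
          Real.sq_sqrt (nrmSq_nonneg v)]
      calc ‖(A *ᵥ v) i‖ ^ 2
          ≤ (Real.sqrt (∑ j, ‖A i j‖ ^ 2) * nrm v) ^ 2 :=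
            pow_le_pow_left₀ (norm_nonneg _) (hrow i) 2
        _ = _ := h3
    calc nrmSq (A *ᵥ v) = ∑ i, ‖(A *ᵥ v) i‖ ^ 2 := rfl
      _ ≤ ∑ i, (∑ j, ‖A i j‖ ^ 2) * nrmSq v :=
          Finset.sum_le_sum fun i _ => key i
      _ = (∑ i, ∑ j, ‖A i j‖ ^ 2) * nrmSq v := by rw [← Finset.sum_mul]
  have h4 := Real.sqrt_le_sqrt hsq
  rwa [Real.sqrt_mul (Finset.sum_nonneg fun _ _ => Finset.sum_nonneg fun _ _ => sq_nonneg _)]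
    at h4

lemma L4 {n : ℕ} (A : Matrix (Fin n) (Fin n) ℂ) (hA : Aᴴ = A) :
    (A * A).trace.re = ∑ i, ∑ j, ‖A i j‖ ^ 2 := by
  simp only [Matrix.trace, Matrix.diag, Matrix.mul_apply]
  rw [Complex.re_sum]
  refine Finset.sum_congr rfl fun i _ => ?_
  rw [Complex.re_sum]
  refine Finset.sum_congr rfl fun j _ => ?_
  have hji : A j i = (starRingEnd ℂ) (A i j) := by
    conv_lhs => rw [← hA]
    simp [Matrix.conjTranspose_apply]
  rw [hji, Complex.mul_conj]
  rw [Complex.ofReal_re, Complex.normSq_eq_norm_sq]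

lemma Hdp {n : ℕ} (M : Matrix (Fin n) (Fin n) ℂ) (x y : Fin n → ℂ) :
    star (M *ᵥ x) ⬝ᵥ y = star x ⬝ᵥ (Mᴴ *ᵥ y) := by
  rw [Matrix.star_mulVec, ← Matrix.dotProduct_mulVec]

lemma mulsub {n : ℕ} (Q X Y : Matrix (Fin n) (Fin n) ℂ) :
    Q * (X - Y) * Q = Q * X * Q - Q * Y * Q := by
  rw [Matrix.mul_sub, Matrix.sub_mul]

theorem stmt_10 (n : ℕ) (O P σ : Matrix (Fin n) (Fin n) ℂ)
    (hO : O ∈ Matrix.unitaryGroup (Fin n) ℂ)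
    (hP : P.IsHermitian) (hP2 : P * P = P)
    (hPO : (1 - P) * O = 1 - P)
    (hσ : σ.PosSemidef) (hσtr : σ.trace = 1)
    (φ : Fin n → ℂ) :
    ‖star φ ⬝ᵥ ((O * σ * Oᴴ - σ) *ᵥ φ)‖ ≤
      2 * Real.sqrt ((star (P *ᵥ φ) ⬝ᵥ (P *ᵥ φ)).re) *
        Real.sqrt ((star φ ⬝ᵥ φ).re) *
        Real.sqrt (((O * σ * Oᴴ - σ) * (O * σ * Oᴴ - σ)).trace.re) := by
  set A := O * σ * Oᴴ - σ with hA
  set Q := (1 : Matrix (Fin n) (Fin n) ℂ) - P with hQdef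
  set ψ := P *ᵥ φ with hψdef
  set χ := Q *ᵥ φ with hχdef
  have hσH : σᴴ = σ := hσ.1
  have hAH : Aᴴ = A := by
    rw [hA, Matrix.conjTranspose_sub, Matrix.conjTranspose_mul, Matrix.conjTranspose_mul,
      Matrix.conjTranspose_conjTranspose, hσH, Matrix.mul_assoc]
  have hQH : Qᴴ = Q := by
    rw [hQdef, Matrix.conjTranspose_sub, Matrix.conjTranspose_one, hP.eq]
  have hOQ : Oᴴ * Q = Q := by
    have h := congrArg Matrix.conjTranspose hPO
    rwa [Matrix.conjTranspose_mul, hQH] at h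
  have hQAQ : Q * A * Q = 0 := by
    have h1 : Q * (O * σ * Oᴴ) * Q = Q * σ * Q := by
      simp only [← Matrix.mul_assoc]
      rw [hPO, Matrix.mul_assoc (Q * σ) Oᴴ Q, hOQ]
    rw [hA, mulsub, h1, sub_self]
  have hPQ : P * Q = 0 := by rw [hQdef, Matrix.mul_sub, Matrix.mul_one, hP2, sub_self]
  have hQP : Q * P = 0 := by rw [hQdef, Matrix.sub_mul, Matrix.one_mul, hP2, sub_self]
  have hφ : φ = ψ + χ := by
    have h : P + Q = 1 := by rw [hQdef]; abel
    calc φ = (P + Q) *ᵥ φ := by rw [h, Matrix.one_mulVec]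
      _ = ψ + χ := Matrix.add_mulVec _ _ _
  have hcross : star χ ⬝ᵥ (A *ᵥ χ) = 0 := by
    rw [hχdef, Hdp, hQH, Matrix.mulVec_mulVec, Matrix.mulVec_mulVec,
      hQAQ, Matrix.zero_mulVec, dotProduct_zero]
  have hcross2 : star ψ ⬝ᵥ χ = 0 := by
    rw [hψdef, hχdef, Hdp, hP.eq, Matrix.mulVec_mulVec, hPQ, Matrix.zero_mulVec,
      dotProduct_zero]
  have hcross3 : star χ ⬝ᵥ ψ = 0 := by
    rw [hχdef, hψdef, Hdp, hQH, Matrix.mulVec_mulVec, hQP, Matrix.zero_mulVec,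
      dotProduct_zero]
  have hdecomp : star φ ⬝ᵥ (A *ᵥ φ) = star ψ ⬝ᵥ (A *ᵥ φ) + star χ ⬝ᵥ (A *ᵥ ψ) := by
    conv_lhs => rw [hφ]
    conv_rhs => rw [hφ]
    simp only [star_add, Matrix.mulVec_add, add_dotProduct, dotProduct_add, hcross]
    ring
  have hsum : nrmSq φ = nrmSq ψ + nrmSq χ := by
    have h : star φ ⬝ᵥ φ = star ψ ⬝ᵥ ψ + star χ ⬝ᵥ χ := by
      conv_lhs => rw [hφ]
      simp only [star_add, add_dotProduct, dotProduct_add, hcross2, hcross3]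
      ring
    rw [← L1, ← L1, ← L1, h, Complex.add_re]
  have hχφ : nrm χ ≤ nrm φ := by
    apply Real.sqrt_le_sqrt
    rw [hsum]
    exact le_add_of_nonneg_left (nrmSq_nonneg ψ)
  have hb1 : ‖star ψ ⬝ᵥ (A *ᵥ φ)‖ ≤ nrm ψ * (frob A * nrm φ) :=
    (L2 _ _).trans (mul_le_mul_of_nonneg_left (L3 A φ) (nrm_nonneg _))
  have hb2 : ‖star χ ⬝ᵥ (A *ᵥ ψ)‖ ≤ nrm φ * (frob A * nrm ψ) := by
    refine (L2 _ _).trans ?_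
    refine le_trans (mul_le_mul_of_nonneg_left (L3 A ψ) (nrm_nonneg _)) ?_
    exact mul_le_mul_of_nonneg_right hχφ (mul_nonneg (frob_nonneg _) (nrm_nonneg _))
  have hrhs1 : Real.sqrt ((star ψ ⬝ᵥ ψ).re) = nrm ψ := by rw [L1]; rfl
  have hrhs2 : Real.sqrt ((star φ ⬝ᵥ φ).re) = nrm φ := by rw [L1]; rfl
  have hrhs3 : Real.sqrt ((A * A).trace.re) = frob A := by rw [L4 A hAH]; rfl
  rw [hrhs1, hrhs2, hrhs3, hdecomp]
  calc ‖star ψ ⬝ᵥ (A *ᵥ φ) + star χ ⬝ᵥ (A *ᵥ ψ)‖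
      ≤ ‖star ψ ⬝ᵥ (A *ᵥ φ)‖ + ‖star χ ⬝ᵥ (A *ᵥ ψ)‖ :=
        norm_add_le _ _
    _ ≤ nrm ψ * (frob A * nrm φ) + nrm φ * (frob A * nrm ψ) := add_le_add hb1 hb2
    _ = 2 * nrm ψ * nrm φ * frob A := by ring
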